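/- arXiv:2407.11762 — 4 statements merged into one kernel-verified Lean document; each statement's English description precedes it below -/
import Mathlib

section
/- Let U_1, ..., U_{n-1} be i.i.d. uniform random variables on [0,1] and let Sigma = sum of the U_i. Then the CDF of Sigma satisfies F_Sigma(sigma) = (1/(n-1)!) * sum_{tau=0}^{floor(sigma)} (-1)^tau * C(n-1, tau) * (sigma - tau)^{n-1} for sigma in [0, n-1]. -/
open MeasureTheory ProbabilityTheory intervalIntegral


noncomputable def ihF (m : ℕ) (σ : ℝ) : ℝ :=
  (1 / (Nat.factorial m : ℝ)) *
    ∑ τ ∈ Finset.range (m + 1), (-1 : ℝ) ^ τ * (m.choose τ) * max (σ - τ) 0 ^ m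

lemma ih_clamp_integral (k : ℕ) (hk : 1 ≤ k) (c : ℝ) :
    ∫ u in (0:ℝ)..1, max (c - u) 0 ^ k
      = (max c 0 ^ (k + 1) - max (c - 1) 0 ^ (k + 1)) / (k + 1) := by
  rcases le_or_gt c 0 with hc | hc
  · have h1 : ∀ u ∈ Set.uIcc (0:ℝ) 1, max (c - u) 0 ^ k = 0 := by
      intro u hu
      rw [Set.uIcc_of_le (by norm_num)] at hu
      rw [max_eq_right (by linarith [hu.1]), zero_pow (by omega)]
    rw [intervalIntegral.integral_congr h1]
    rw [max_eq_right hc, max_eq_right (by linarith)]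
    simp [zero_pow]
  rcases le_or_gt 1 c with hc1 | hc1
  · have h1 : ∀ u ∈ Set.uIcc (0:ℝ) 1, max (c - u) 0 ^ k = (c - u) ^ k := by
      intro u hu
      rw [Set.uIcc_of_le (by norm_num)] at hu
      rw [max_eq_left (by linarith [hu.2])]
    rw [intervalIntegral.integral_congr h1,
      intervalIntegral.integral_comp_sub_left (fun x => x ^ k) c, integral_pow]
    rw [max_eq_left (by linarith), max_eq_left (by linarith)]
    norm_num
  · -- 0 < c < 1
    have hsplit : ∫ u in (0:ℝ)..1, max (c - u) 0 ^ k
        = (∫ u in (0:ℝ)..c, max (c - u) 0 ^ k) + ∫ u in c..(1:ℝ), max (c - u) 0 ^ k := by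
      rw [intervalIntegral.integral_add_adjacent_intervals] <;>
        exact (Continuous.intervalIntegrable (by fun_prop) _ _)
    have h1 : ∫ u in (0:ℝ)..c, max (c - u) 0 ^ k = c ^ (k+1) / (k+1) := by
      have : ∀ u ∈ Set.uIcc (0:ℝ) c, max (c - u) 0 ^ k = (c - u) ^ k := by
        intro u hu
        rw [Set.uIcc_of_le hc.le] at hu
        rw [max_eq_left (by linarith [hu.2])]
      rw [intervalIntegral.integral_congr this,
        intervalIntegral.integral_comp_sub_left (fun x => x ^ k) c, integral_pow]
      norm_num
    have h2 : ∫ u in c..(1:ℝ), max (c - u) 0 ^ k = 0 := by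
      have : ∀ u ∈ Set.uIcc c (1:ℝ), max (c - u) 0 ^ k = 0 := by
        intro u hu
        rw [Set.uIcc_of_le hc1.le] at hu
        rw [max_eq_right (by linarith [hu.1]), zero_pow (by omega)]
      rw [intervalIntegral.integral_congr this]; simp
    rw [hsplit, h1, h2, max_eq_left hc.le, max_eq_right (by linarith)]
    rw [zero_pow (by omega)]
    ring


lemma ihF_rec (m : ℕ) (hm : 1 ≤ m) (σ : ℝ) :
    ihF (m + 1) σ = ∫ u in (0:ℝ)..1, ihF m (σ - u) := by
  set A : ℕ → ℝ := fun j => max (σ - j) 0 ^ (m + 1) with hA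
  unfold ihF
  rw [intervalIntegral.integral_const_mul,
    intervalIntegral.integral_finset_sum (fun τ _ =>
      (Continuous.intervalIntegrable (by fun_prop) 0 1))]
  have hterm : ∀ τ ∈ Finset.range (m + 1),
      (∫ u in (0:ℝ)..1, (-1:ℝ) ^ τ * (m.choose τ) * max (σ - u - τ) 0 ^ m)
        = (-1:ℝ) ^ τ * (m.choose τ) * ((A τ - A (τ + 1)) / (m + 1)) := by
    intro τ _
    rw [intervalIntegral.integral_const_mul]
    have : (fun u : ℝ => max (σ - u - τ) 0 ^ m) = fun u => max ((σ - τ) - u) 0 ^ m := by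
      funext u; ring_nf
    rw [this, ih_clamp_integral m hm (σ - τ)]
    have h1 : A τ = max (σ - τ) 0 ^ (m + 1) := rfl
    have h2 : A (τ + 1) = max (σ - τ - 1) 0 ^ (m + 1) := by
      simp only [hA]; push_cast; ring_nf
    rw [h1, h2]
  rw [Finset.sum_congr rfl hterm]
  have hsum : ∑ τ ∈ Finset.range (m + 1 + 1), (-1:ℝ) ^ τ * ((m+1).choose τ) * A τ
      = ∑ τ ∈ Finset.range (m + 1), (-1:ℝ) ^ τ * (m.choose τ) * (A τ - A (τ + 1)) := by
    have e1 : ∑ τ ∈ Finset.range (m + 2), (-1:ℝ) ^ τ * ((m+1).choose τ) * A τ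
        = (∑ τ ∈ Finset.range (m + 1), (-1:ℝ) ^ (τ+1) * ((m+1).choose (τ+1)) * A (τ+1)) + A 0 := by
      rw [Finset.sum_range_succ' (fun τ => (-1:ℝ) ^ τ * ((m+1).choose τ) * A τ) (m+1)]
      norm_num
    have e2 : ∑ τ ∈ Finset.range (m + 1), (-1:ℝ) ^ (τ+1) * (m.choose (τ+1)) * A (τ+1)
        = (∑ τ ∈ Finset.range (m + 1), (-1:ℝ) ^ τ * (m.choose τ) * A τ) - A 0 := by
      have := Finset.sum_range_succ' (fun τ => (-1:ℝ) ^ τ * (m.choose τ) * A τ) (m+1)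
      rw [Finset.sum_range_succ (fun τ => (-1:ℝ) ^ τ * (m.choose τ) * A τ) (m+1)] at this
      simp only [Nat.choose_self, Nat.choose_succ_self, Nat.cast_zero, Nat.choose_zero_right,
        Nat.cast_one, pow_zero] at this ⊢
      simp only [mul_zero, zero_mul, add_zero, one_mul, mul_one] at this
      linarith [this]
    calc ∑ τ ∈ Finset.range (m + 1 + 1), (-1:ℝ) ^ τ * ((m+1).choose τ) * A τ
        = (∑ τ ∈ Finset.range (m + 1), (-1:ℝ) ^ (τ+1) * ((m+1).choose (τ+1)) * A (τ+1)) + A 0 := e1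
      _ = (∑ τ ∈ Finset.range (m + 1),
            ((-1:ℝ) ^ (τ+1) * (m.choose τ) * A (τ+1) + (-1:ℝ) ^ (τ+1) * (m.choose (τ+1)) * A (τ+1))) + A 0 := by
          congr 1; apply Finset.sum_congr rfl; intro τ _
          rw [Nat.choose_succ_succ]; push_cast; ring
      _ = (∑ τ ∈ Finset.range (m + 1), (-1:ℝ) ^ (τ+1) * (m.choose τ) * A (τ+1))
          + (∑ τ ∈ Finset.range (m + 1), (-1:ℝ) ^ (τ+1) * (m.choose (τ+1)) * A (τ+1)) + A 0 := by
          rw [Finset.sum_add_distrib]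
      _ = (∑ τ ∈ Finset.range (m + 1), (-1:ℝ) ^ (τ+1) * (m.choose τ) * A (τ+1))
          + ((∑ τ ∈ Finset.range (m + 1), (-1:ℝ) ^ τ * (m.choose τ) * A τ) - A 0) + A 0 := by
          rw [e2]
      _ = ∑ τ ∈ Finset.range (m + 1), (-1:ℝ) ^ τ * (m.choose τ) * (A τ - A (τ + 1)) := by
          have h3 : ∀ τ ∈ Finset.range (m+1), (-1:ℝ)^τ * (m.choose τ) * (A τ - A (τ+1))
              = (-1:ℝ)^τ * (m.choose τ) * A τ + (-1:ℝ)^(τ+1) * (m.choose τ) * A (τ+1) := by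
            intro τ _; ring
          rw [Finset.sum_congr rfl h3, Finset.sum_add_distrib]; ring
  have hfac : (Nat.factorial (m+1) : ℝ) = (Nat.factorial m : ℝ) * (m + 1) := by
    rw [Nat.factorial_succ]; push_cast; ring
  rw [hsum, hfac]
  have h1 : ((m:ℝ) + 1) ≠ 0 := by positivity
  have h2 : (Nat.factorial m : ℝ) ≠ 0 := Nat.cast_ne_zero.mpr (Nat.factorial_ne_zero m)
  rw [Finset.mul_sum, Finset.mul_sum]
  apply Finset.sum_congr rfl; intro τ _
  field_simp
  try ring


lemma ihF_continuous (m : ℕ) : Continuous (ihF m) := by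
  unfold ihF
  exact continuous_const.mul (continuous_finset_sum _ fun τ _ =>
    continuous_const.mul (((continuous_id.sub continuous_const).max continuous_const).pow m))

lemma ihF_one (σ : ℝ) : ihF 1 σ = max σ 0 - max (σ - 1) 0 := by
  unfold ihF
  rw [Finset.sum_range_succ, Finset.sum_range_succ, Finset.sum_range_zero]
  norm_num
  ring

lemma ihF_nonneg (m : ℕ) (hm : 1 ≤ m) (σ : ℝ) : 0 ≤ ihF m σ := by
  induction m, hm using Nat.le_induction generalizing σ with
  | base =>
    rw [ihF_one]
    rcases le_total σ 1 with h | h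
    · rw [show max (σ-1) 0 = 0 from max_eq_right (by linarith)]
      simp only [sub_zero]
      exact le_max_right σ 0
    · rw [max_eq_left (by linarith), max_eq_left (by linarith)]; linarith
  | succ m hm ih =>
    rw [ihF_rec m hm σ]
    apply intervalIntegral.integral_nonneg zero_le_one
    intro u _
    exact ih _

lemma ih_pi (m : ℕ) (σ : ℝ) :
    (Measure.pi fun _ : Fin (m + 1) => volume.restrict (Set.Icc (0:ℝ) 1))
      {x | ∑ i, x i ≤ σ} = ENNReal.ofReal (ihF (m + 1) σ) := by
  induction m generalizing σ with
  | zero =>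
    have hmp := measurePreserving_funUnique (volume.restrict (Set.Icc (0:ℝ) 1)) (Fin 1)
    have hpre : (MeasurableEquiv.funUnique (Fin 1) ℝ) ⁻¹' Set.Iic σ
        = {x : Fin 1 → ℝ | ∑ i, x i ≤ σ} := by
      ext x
      simp [MeasurableEquiv.funUnique, Fin.sum_univ_one]
    erw [← hpre, hmp.measure_preimage (s := Set.Iic σ) measurableSet_Iic.nullMeasurableSet,
      Measure.restrict_apply measurableSet_Iic]
    have h2 : Set.Iic σ ∩ Set.Icc (0:ℝ) 1 = Set.Icc 0 (min σ 1) := by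
      ext x; simp only [Set.mem_inter_iff, Set.mem_Iic, Set.mem_Icc, le_min_iff]; tauto
    rw [h2, Real.volume_Icc, ihF_one]
    rcases le_total σ 0 with h | h
    · rw [max_eq_right h, max_eq_right (by linarith), min_eq_left (by linarith)]
      simp [ENNReal.ofReal_eq_zero.mpr, h]
    · rcases le_total σ 1 with h1 | h1
      · rw [max_eq_left h, max_eq_right (by linarith), min_eq_left h1]; try norm_num
      · rw [max_eq_left h, max_eq_left (by linarith), min_eq_right h1]; norm_num
  | succ m ih =>
    set ν := volume.restrict (Set.Icc (0:ℝ) 1) with hν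
    have hmp := measurePreserving_piFinSuccAbove (fun _ : Fin (m + 2) => ν) 0
    set t : Set (ℝ × (Fin (m + 1) → ℝ)) := {p | p.1 + ∑ i, p.2 i ≤ σ} with hts
    have ht : MeasurableSet t := by
      apply measurableSet_le _ measurable_const
      exact measurable_fst.add (Finset.measurable_sum _ fun i _ =>
        (measurable_pi_apply i).comp measurable_snd)
    have hpre : (MeasurableEquiv.piFinSuccAbove (fun _ => ℝ) 0) ⁻¹' t
        = {x : Fin (m + 2) → ℝ | ∑ i, x i ≤ σ} := by
      ext x
      simp only [Set.mem_preimage, hts, Set.mem_setOf_eq, MeasurableEquiv.piFinSuccAbove_apply,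
        Fin.insertNthEquiv_zero, Fin.consEquiv_symm_apply]
      rw [Fin.sum_univ_succAbove (fun i => x i) 0]
      simp [Fin.tail]
    rw [← hpre, hmp.measure_preimage ht.nullMeasurableSet, Measure.prod_apply ht]
    have hsec : ∀ u : ℝ, (Prod.mk u ⁻¹' t) = {x : Fin (m + 1) → ℝ | ∑ i, x i ≤ σ - u} := by
      intro u; ext x
      simp only [Set.mem_preimage, hts, Set.mem_setOf_eq]
      constructor <;> intro h <;> linarith
    calc ∫⁻ u, (Measure.pi fun _ : Fin (m + 1) => ν) (Prod.mk u ⁻¹' t) ∂ν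
        = ∫⁻ u, ENNReal.ofReal (ihF (m + 1) (σ - u)) ∂ν := by
          apply lintegral_congr; intro u; rw [hsec u, ih (σ - u)]
      _ = ENNReal.ofReal (∫ u, ihF (m + 1) (σ - u) ∂ν) := by
          rw [ofReal_integral_eq_lintegral_ofReal]
          · exact ((ihF_continuous (m+1)).comp
              (continuous_const.sub continuous_id)).integrableOn_Icc
          · exact Filter.Eventually.of_forall fun u => ihF_nonneg (m+1) (by omega) _
      _ = ENNReal.ofReal (ihF (m + 2) σ) := by
          congr 1
          rw [hν]
          have : ∫ u in Set.Icc (0:ℝ) 1, ihF (m + 1) (σ - u)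
              = ∫ u in (0:ℝ)..1, ihF (m + 1) (σ - u) := by
            rw [MeasureTheory.integral_Icc_eq_integral_Ioc,
              intervalIntegral.integral_of_le zero_le_one]
          rw [this, ← ihF_rec (m + 1) (by omega) σ]

lemma ih_map_pi {Ω : Type*} [MeasurableSpace Ω] (μ : Measure Ω) [IsProbabilityMeasure μ]
    {ι : Type*} [Fintype ι] (U : ι → Ω → ℝ) (hmeas : ∀ i, Measurable (U i))
    (hindep : iIndepFun U μ)
    (hunif : ∀ i, Measure.map (U i) μ = volume.restrict (Set.Icc (0:ℝ) 1)) :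
    Measure.map (fun ω i => U i ω) μ
      = Measure.pi (fun _ : ι => volume.restrict (Set.Icc (0:ℝ) 1)) := by
  refine (Measure.pi_eq fun s hs => ?_).symm
  rw [Measure.map_apply (measurable_pi_lambda _ hmeas) (MeasurableSet.univ_pi hs)]
  have hpre : (fun ω i => U i ω) ⁻¹' Set.pi Set.univ s = ⋂ i, U i ⁻¹' s i := by
    ext ω; simp [Set.mem_pi]
  rw [hpre, hindep.meas_iInter fun i => ⟨s i, hs i, rfl⟩]
  exact Finset.prod_congr rfl fun i _ => by
    rw [← Measure.map_apply (hmeas i) (hs i), hunif i]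


/-- **Irwin–Hall distribution.**  If `U 1, …, U (n-1)` are i.i.d. uniform on `[0,1]`
and `Σ = ∑ i, U i`, then for `σ ∈ [0, n-1]`,
`P(Σ ≤ σ) = (1/(n-1)!) ∑_{τ=0}^{⌊σ⌋} (-1)^τ C(n-1, τ) (σ - τ)^(n-1)`. -/
theorem irwin_hall_cdf
    {Ω : Type*} [MeasurableSpace Ω] (μ : Measure Ω) [IsProbabilityMeasure μ]
    (n : ℕ) (hn : 1 ≤ n) (U : Fin (n - 1) → Ω → ℝ)
    (hmeas : ∀ i, Measurable (U i))
    (hindep : iIndepFun U μ)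
    (hunif : ∀ i, Measure.map (U i) μ = volume.restrict (Set.Icc (0 : ℝ) 1))
    (σ : ℝ) (hσ : σ ∈ Set.Icc (0 : ℝ) ((n : ℝ) - 1)) :
    (μ {ω | ∑ i, U i ω ≤ σ}).toReal =
      (1 / (Nat.factorial (n - 1) : ℝ)) *
        ∑ τ ∈ Finset.range (⌊σ⌋₊ + 1),
          (-1 : ℝ) ^ τ * ((n - 1).choose τ) * (σ - τ) ^ (n - 1) := by
  obtain ⟨hσ0, hσ1⟩ := hσ
  match n, hn, U, hmeas, hindep, hunif, hσ1 with
  | 1, _, U, hmeas, hindep, hunif, hσ1 =>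
    have hσe : σ = 0 := le_antisymm (by norm_num at hσ1; exact hσ1) hσ0
    subst hσe
    have h1 : {ω : Ω | ∑ i : Fin (1 - 1), U i ω ≤ 0} = Set.univ := by
      ext ω; simp
    rw [h1, measure_univ]
    norm_num
  | (m + 2), _, U, hmeas, hindep, hunif, hσ1 =>
    have hσm : σ ≤ (m + 1 : ℕ) := by push_cast at hσ1 ⊢; linarith
    have hset : MeasurableSet {x : Fin (m + 2 - 1) → ℝ | ∑ i, x i ≤ σ} :=
      measurableSet_le (Finset.measurable_sum _ fun i _ => measurable_pi_apply i)
        measurable_const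
    have key : μ {ω | ∑ i, U i ω ≤ σ} = ENNReal.ofReal (ihF (m + 1) σ) := by
      rw [show {ω | ∑ i, U i ω ≤ σ}
          = (fun ω (i : Fin (m + 2 - 1)) => U i ω) ⁻¹' {x | ∑ i, x i ≤ σ} from rfl,
        ← Measure.map_apply (measurable_pi_lambda _ hmeas) hset,
        ih_map_pi μ U hmeas hindep hunif]
      exact ih_pi m σ
    rw [key, ENNReal.toReal_ofReal (ihF_nonneg (m + 1) (by omega) σ)]
    unfold ihF
    have hfloor : ⌊σ⌋₊ + 1 ≤ m + 2 := by
      have h := Nat.floor_le_floor hσm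
      rw [Nat.floor_natCast] at h
      omega
    congr 1
    rw [← Finset.sum_subset (Finset.range_subset_range.mpr hfloor) (fun τ _ hτ => ?_)]
    · apply Finset.sum_congr rfl
      intro τ hτ
      have : (τ : ℝ) ≤ σ := by
        rw [Finset.mem_range] at hτ
        exact (Nat.le_floor_iff hσ0).mp (by omega)
      rw [max_eq_left (by linarith)]
      norm_num
    · rw [Finset.mem_range, not_lt] at hτ
      have : σ < τ := Nat.lt_of_floor_lt (by omega)
      rw [max_eq_right (by linarith), zero_pow (by omega), mul_zero]
end

section
/- Let A ~ exp(mu) (arrival/first-hitting time) and return times ~ exp(lambda), with a random walk forked at time t_F, terminated at time t_T, and observed at time t > t_T, where t_F < t_T. The CDF of the survival estimate S is: F(x) = 1 if x > exp(-lambda(t - t_T)); F(x) = exp(-mu(t_T - t_F)) if x < exp(-lambda(t - t_F)); and otherwise F(x) = x * (1 - exp(-mu(t - t_F)) * x^{-mu/lambda}) / exp(-lambda(t - t_T)) + exp(-mu(t_T - t_F)). -/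
open MeasureTheory ProbabilityTheory Real

open Set

lemma expMeasure_apply' {r : ℝ} {s : Set ℝ} (hs : MeasurableSet s) :
    expMeasure r s = ∫⁻ y in s, exponentialPDF r y :=
  withDensity_apply _ hs

lemma expMeasure_singleton (r p : ℝ) : expMeasure r {p} = 0 := by
  rw [expMeasure_apply' (measurableSet_singleton p)]
  exact setLIntegral_measure_zero _ _ (measure_singleton p)

lemma expMeasure_Iio_nonpos {r y : ℝ} (hy : y ≤ 0) : expMeasure r (Iio y) = 0 := by
  rw [expMeasure_apply' measurableSet_Iio]
  exact lintegral_exponentialPDF_of_nonpos hy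

lemma expMeasure_Iic {r y : ℝ} (hr : 0 < r) (hy : 0 ≤ y) :
    expMeasure r (Iic y) = ENNReal.ofReal (1 - exp (-(r * y))) := by
  rw [expMeasure_apply' measurableSet_Iic, lintegral_exponentialPDF_eq_antiDeriv hr, if_pos hy]

lemma expMeasure_Ici {r y : ℝ} (hr : 0 < r) (hy : 0 ≤ y) :
    expMeasure r (Ici y) = ENNReal.ofReal (exp (-(r * y))) := by
  haveI := isProbabilityMeasure_expMeasure hr
  have hIio : expMeasure r (Iio y) = ENNReal.ofReal (1 - exp (-(r * y))) := by
    rw [← Set.Iic_diff_right, measure_diff_null (expMeasure_singleton r y), expMeasure_Iic hr hy]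
  rw [← Set.compl_Iio, measure_compl measurableSet_Iio (measure_ne_top _ _), measure_univ, hIio]
  rw [← ENNReal.ofReal_one, ← ENNReal.ofReal_sub]
  · norm_num
  · have : exp (-(r * y)) ≤ 1 := exp_le_one_iff.mpr (by nlinarith)
    linarith

/-- **CDF of the survival estimate of a forked-and-terminated random walk.**
A walk is forked at time `t_F`; its first arrival time at the observing node is
`A = t_F + (exponential with rate μ)`; after arrival, return times are i.i.d.
exponential with rate `λ`; the walk is terminated at `t_T` and observed at `t > t_T`.
By memorylessness, the survival estimate at time `t` is
`S = max (exp (-λ(t - A))) (exp (-λ(t - t_T)) * exp (-λ E))` if the walk arrived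
before termination (`A < t_T`, where `E ~ exp(λ)` is the residual return time), and
`S = 0` otherwise (the node never saw the walk).  Its CDF is
`F(x) = 1` for `x > exp (-λ(t - t_T))`, `F(x) = exp (-μ(t_T - t_F))` for
`x < exp (-λ(t - t_F))`, and otherwise
`F(x) = x (1 - exp (-μ(t - t_F)) x^(-μ/λ)) / exp (-λ(t - t_T)) + exp (-μ(t_T - t_F))`. -/
theorem forked_terminated_survival_cdf
    {Ω : Type*} [MeasurableSpace Ω] (μP : Measure Ω) [IsProbabilityMeasure μP]
    (mu lam t_F t_T t : ℝ) (hmu : 0 < mu) (hlam : 0 < lam)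
    (hFT : t_F < t_T) (hTt : t_T < t)
    (A E : Ω → ℝ) (hA : Measurable A) (hE : Measurable E)
    (hindep : IndepFun A E μP)
    (hlawA : Measure.map (fun ω => A ω - t_F) μP = expMeasure mu)
    (hlawE : Measure.map E μP = expMeasure lam)
    (S : Ω → ℝ)
    (hS : S = fun ω => if A ω < t_T then
        max (exp (-lam * (t - A ω))) (exp (-lam * (t - t_T)) * exp (-lam * E ω))
      else 0)
    (x : ℝ) (hx : 0 ≤ x) :
    (μP {ω | S ω ≤ x}).toReal =
      if exp (-lam * (t - t_T)) < x then 1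
      else if x < exp (-lam * (t - t_F)) then exp (-mu * (t_T - t_F))
      else x * (1 - exp (-mu * (t - t_F)) * x ^ (-(mu / lam)) ) / exp (-lam * (t - t_T))
        + exp (-mu * (t_T - t_F)) := by
  subst hS
  set X : Ω → ℝ := fun ω => A ω - t_F with hXdef
  have hX : Measurable X := hA.sub_const t_F
  have hln : lam ≠ 0 := hlam.ne'
  have hE0 : ∀ᵐ ω ∂μP, 0 ≤ E ω := by
    rw [ae_iff]
    have h1 : {ω | ¬ 0 ≤ E ω} = E ⁻¹' (Iio 0) := by ext ω; simp [not_le]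
    rw [h1, ← Measure.map_apply hE measurableSet_Iio, hlawE, expMeasure_Iio_nonpos le_rfl]
  have hA0 : ∀ᵐ ω ∂μP, t_F ≤ A ω := by
    rw [ae_iff]
    have h1 : {ω | ¬ t_F ≤ A ω} = X ⁻¹' (Iio 0) := by
      ext ω; simp [hXdef, not_le, sub_neg]
    rw [h1, ← Measure.map_apply hX measurableSet_Iio, hlawA, expMeasure_Iio_nonpos le_rfl]
  by_cases h1 : exp (-lam * (t - t_T)) < x
  · rw [if_pos h1]
    have hfull : (fun ω => if A ω < t_T then
        max (exp (-lam * (t - A ω))) (exp (-lam * (t - t_T)) * exp (-lam * E ω))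
      else 0) ⁻¹' (Iic x) =ᵐ[μP] (univ : Set Ω) := by
      rw [Filter.eventuallyEq_univ]
      filter_upwards [hE0] with ω hEω
      simp only [Set.mem_preimage, Set.mem_Iic]
      split_ifs with hAω
      · apply max_le
        · exact le_of_lt (lt_of_lt_of_le (exp_lt_exp.mpr (by nlinarith)) h1.le)
        · refine le_of_lt (lt_of_le_of_lt ?_ h1)
          calc exp (-lam * (t - t_T)) * exp (-lam * E ω)
              ≤ exp (-lam * (t - t_T)) * 1 := by
                refine mul_le_mul_of_nonneg_left ?_ (exp_nonneg _)
                exact exp_le_one_iff.mpr (by nlinarith)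
            _ = exp (-lam * (t - t_T)) := mul_one _
      · exact hx
    rw [show {ω | (if A ω < t_T then
        max (exp (-lam * (t - A ω))) (exp (-lam * (t - t_T)) * exp (-lam * E ω))
      else 0) ≤ x} = (fun ω => if A ω < t_T then
        max (exp (-lam * (t - A ω))) (exp (-lam * (t - t_T)) * exp (-lam * E ω))
      else 0) ⁻¹' (Iic x) from rfl, measure_congr hfull, measure_univ, ENNReal.toReal_one]
  · rw [if_neg h1]
    push_neg at h1
    by_cases h2 : x < exp (-lam * (t - t_F))
    · rw [if_pos h2]
      have hset : (fun ω => if A ω < t_T then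
          max (exp (-lam * (t - A ω))) (exp (-lam * (t - t_T)) * exp (-lam * E ω))
        else 0) ⁻¹' (Iic x) =ᵐ[μP] X ⁻¹' (Ici (t_T - t_F)) := by
        rw [Filter.eventuallyEq_set]
        filter_upwards [hA0] with ω hAω
        simp only [Set.mem_preimage, Set.mem_Iic, Set.mem_Ici, hXdef, le_sub_iff_add_le,
          sub_add_cancel]
        constructor
        · intro hle
          by_contra hc
          push_neg at hc
          rw [if_pos hc] at hle
          have hee : exp (-lam * (t - t_F)) ≤ exp (-lam * (t - A ω)) :=
            exp_le_exp.mpr (by nlinarith)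
          linarith [le_trans hee (le_trans (le_max_left _ _) hle)]
        · intro hge
          rw [if_neg (not_lt.mpr hge)]
          exact hx
      rw [show {ω | (if A ω < t_T then
          max (exp (-lam * (t - A ω))) (exp (-lam * (t - t_T)) * exp (-lam * E ω))
        else 0) ≤ x} = (fun ω => if A ω < t_T then
          max (exp (-lam * (t - A ω))) (exp (-lam * (t - t_T)) * exp (-lam * E ω))
        else 0) ⁻¹' (Iic x) from rfl, measure_congr hset,
        ← Measure.map_apply hX measurableSet_Ici, hlawA,
        expMeasure_Ici hmu (by linarith), ENNReal.toReal_ofReal (exp_nonneg _)]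
      ring_nf
    · rw [if_neg h2]
      push_neg at h2
      have hxpos : 0 < x := lt_of_lt_of_le (exp_pos _) h2
      set a : ℝ := t + Real.log x / lam with hadef
      have hlog1 : -lam * (t - t_F) ≤ Real.log x := (le_log_iff_exp_le hxpos).mpr h2
      have hlog2 : Real.log x ≤ -lam * (t - t_T) := by
        rw [← exp_le_exp, exp_log hxpos]; exact h1
      have haF : t_F ≤ a := by
        have hd : t_F - t ≤ Real.log x / lam := by
          rw [le_div_iff₀ hlam]; nlinarith
        rw [hadef]; linarith
      have haT : a ≤ t_T := by
        have hd : Real.log x / lam ≤ t_T - t := by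
          rw [div_le_iff₀ hlam]; nlinarith
        rw [hadef]; linarith
      have hseteq : {ω | (if A ω < t_T then
          max (exp (-lam * (t - A ω))) (exp (-lam * (t - t_T)) * exp (-lam * E ω))
        else 0) ≤ x} =
          (X ⁻¹' Iic (a - t_F) ∩ E ⁻¹' Ici (t_T - a)) ∪ X ⁻¹' Ici (t_T - t_F) := by
        ext ω
        simp only [mem_setOf_eq, mem_union, mem_inter_iff, mem_preimage, mem_Iic, mem_Ici,
          hXdef, sub_le_sub_iff_right, le_sub_iff_add_le, sub_add_cancel]
        have hu : exp (-lam * (t - A ω)) ≤ x ↔ A ω ≤ a := by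
          rw [← le_log_iff_exp_le hxpos, hadef]
          constructor
          · intro h
            have hd : -(t - A ω) ≤ Real.log x / lam := by
              rw [le_div_iff₀ hlam]; nlinarith
            linarith
          · intro h
            have hd : A ω - t ≤ Real.log x / lam := by linarith
            nlinarith [(le_div_iff₀ hlam).mp hd]
        have hv : exp (-lam * (t - t_T)) * exp (-lam * E ω) ≤ x ↔ t_T - a ≤ E ω := by
          rw [← exp_add, ← le_log_iff_exp_le hxpos, hadef]
          constructor
          · intro h
            have hd : t_T - t - E ω ≤ Real.log x / lam := by
              rw [le_div_iff₀ hlam]; nlinarith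
            linarith
          · intro h
            have hd : t_T - t - E ω ≤ Real.log x / lam := by linarith
            nlinarith [(le_div_iff₀ hlam).mp hd]
        by_cases hc : A ω < t_T
        · rw [if_pos hc, max_le_iff, hu, hv]
          constructor
          · rintro ⟨h1', h2'⟩; exact Or.inl ⟨h1', h2'⟩
          · rintro (⟨h1', h2'⟩ | h3')
            · exact ⟨h1', h2'⟩
            · exact absurd hc (not_lt.mpr h3')
        · rw [if_neg hc]
          push_neg at hc
          exact ⟨fun _ => Or.inr hc, fun _ => hx⟩
      have hW0 : μP ((X ⁻¹' Iic (a - t_F) ∩ E ⁻¹' Ici (t_T - a)) ∩ X ⁻¹' Ici (t_T - t_F))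
          = 0 := by
        refine measure_mono_null (fun ω hω => ?_) (show μP (X ⁻¹' {t_T - t_F}) = 0 by
          rw [← Measure.map_apply hX (measurableSet_singleton _), hlawA]
          exact expMeasure_singleton _ _)
        obtain ⟨⟨ha1, _⟩, ha3⟩ := hω
        simp only [mem_preimage, mem_Iic, mem_Ici] at ha1 ha3
        simp only [mem_preimage, mem_singleton_iff]
        exact le_antisymm (by linarith) ha3
      have hindep' : IndepFun X E μP :=
        hindep.comp (measurable_id.sub_const t_F) measurable_id
      have hunion := measure_union_add_inter (μ := μP)
        (t := X ⁻¹' Ici (t_T - t_F))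
        (X ⁻¹' Iic (a - t_F) ∩ E ⁻¹' Ici (t_T - a)) (hX measurableSet_Ici)
      rw [hW0, add_zero] at hunion
      have hIU : μP (X ⁻¹' Iic (a - t_F) ∩ E ⁻¹' Ici (t_T - a))
          = ENNReal.ofReal (1 - exp (-(mu * (a - t_F))))
            * ENNReal.ofReal (exp (-(lam * (t_T - a)))) := by
        rw [hindep'.measure_inter_preimage_eq_mul _ _ measurableSet_Iic measurableSet_Ici,
          ← Measure.map_apply hX measurableSet_Iic, ← Measure.map_apply hE measurableSet_Ici,
          hlawA, hlawE, expMeasure_Iic hmu (by linarith), expMeasure_Ici hlam (by linarith)]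
      have hIW : μP (X ⁻¹' Ici (t_T - t_F)) = ENNReal.ofReal (exp (-(mu * (t_T - t_F)))) := by
        rw [← Measure.map_apply hX measurableSet_Ici, hlawA,
          expMeasure_Ici hmu (by linarith)]
      have hp : (0:ℝ) ≤ 1 - exp (-(mu * (a - t_F))) := by
        have : exp (-(mu * (a - t_F))) ≤ 1 := exp_le_one_iff.mpr (by nlinarith)
        linarith
      rw [hseteq, hunion, hIU, hIW,
        ENNReal.toReal_add (ENNReal.mul_ne_top ENNReal.ofReal_ne_top ENNReal.ofReal_ne_top)
          ENNReal.ofReal_ne_top,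
        ENNReal.toReal_mul, ENNReal.toReal_ofReal hp, ENNReal.toReal_ofReal (exp_nonneg _),
        ENNReal.toReal_ofReal (exp_nonneg _)]
      have e1 : exp (-(lam * (t_T - a))) = x * exp (lam * (t - t_T)) := by
        rw [show -(lam * (t_T - a)) = Real.log x + lam * (t - t_T) by
          rw [hadef]; field_simp; ring, exp_add, exp_log hxpos]
      have e2 : exp (-(mu * (a - t_F))) = exp (-mu * (t - t_F)) * x ^ (-(mu / lam)) := by
        rw [rpow_def_of_pos hxpos, ← exp_add]
        congr 1
        rw [hadef]; field_simp; ring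
      have e3 : exp (-lam * (t - t_T)) = (exp (lam * (t - t_T)))⁻¹ := by
        rw [← exp_neg]; ring_nf
      have e4 : exp (-(mu * (t_T - t_F))) = exp (-mu * (t_T - t_F)) := by ring_nf
      rw [e1, e2, e4, e3]
      simp only [div_eq_mul_inv, inv_inv]
      ring
end

section
/- With arrival rate mu, return rate lambda (mu != 2*lambda), fork time t_F, termination time t_T, and observation time t > t_T, the expectation of the survival estimate S is E[S] = exp(-mu(t_T - t_F)) * exp(-lambda(t - t_T)) * (1/(2 - mu/lambda) - 1) + exp(-lambda(t - t_T))/2 + exp(-2*lambda(t - t_F)) * exp(lambda(t - t_T)) * (1/2 - 1/(2 - mu/lambda)). -/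
open MeasureTheory ProbabilityTheory Real Set Filter Topology
open scoped ENNReal NNReal

lemma pdfReal_eq (r x : ℝ) :
    exponentialPDFReal r x = if 0 ≤ x then r * exp (-(r * x)) else 0 := by
  rw [exponentialPDFReal, gammaPDFReal]
  simp only [rpow_one, Gamma_one, div_one, sub_self, rpow_zero, mul_one]

lemma integral_expMeasure_eq {r : ℝ} (hr : 0 < r) (g : ℝ → ℝ) :
    ∫ x, g x ∂(expMeasure r) = ∫ x in Ioi (0:ℝ), r * exp (-(r * x)) * g x := by
  have h1 : expMeasure r
      = (volume : Measure ℝ).withDensity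
          (fun x => ((fun y => (exponentialPDFReal r y).toNNReal) x : ℝ≥0∞)) := rfl
  rw [h1, integral_withDensity_eq_integral_smul
    (show Measurable fun y => (exponentialPDFReal r y).toNNReal from
      measurable_real_toNNReal.comp (measurable_exponentialPDFReal r)) g]
  have h2 : ∀ x : ℝ, (exponentialPDFReal r x).toNNReal • g x
      = (Ici (0:ℝ)).indicator (fun x => r * exp (-(r * x)) * g x) x := by
    intro x
    rw [NNReal.smul_def, Real.coe_toNNReal', pdfReal_eq, indicator]
    by_cases h : 0 ≤ x
    · simp [h, max_eq_left (by positivity : (0:ℝ) ≤ r * exp (-(r*x)))]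
    · simp [h]
  simp_rw [h2]
  rw [integral_indicator measurableSet_Ici, integral_Ici_eq_integral_Ioi]

lemma integral_exp_Ioi' {c : ℝ} (hc : 0 < c) (a : ℝ) :
    ∫ x in Ioi a, exp (-(c * x)) = exp (-(c * a)) / c := by
  have hderiv : ∀ x ∈ Ici a, HasDerivAt (fun y => -(exp (-(c * y)) / c)) (exp (-(c * x))) x := by
    intro x _
    have h : HasDerivAt (fun y => exp (-(c * y))) (-c * exp (-(c * x))) x := by
      simpa [mul_comm] using (((hasDerivAt_id x).const_mul (-c)).exp)
    have := (h.div_const c).neg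
    rw [show -(-c * rexp (-(c * x)) / c) = rexp (-(c * x)) by rw [neg_mul, neg_div, neg_neg, mul_div_cancel_left₀ _ hc.ne']] at this
    exact this
  have hint : IntegrableOn (fun x => exp (-(c * x))) (Ioi a) := by
    simpa [neg_mul] using exp_neg_integrableOn_Ioi a hc
  have htend : Tendsto (fun y => -(exp (-(c * y)) / c)) atTop (𝓝 0) := by
    have : Tendsto (fun y : ℝ => exp (-(c * y))) atTop (𝓝 0) := by
      have h1 : Tendsto (fun y : ℝ => c * y) atTop atTop := tendsto_id.const_mul_atTop hc
      have h2 := Real.tendsto_exp_atBot.comp (tendsto_neg_atTop_atBot.comp h1)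
      simpa [Function.comp_def] using h2
    simpa using (this.div_const c).neg
  have := integral_Ioi_of_hasDerivAt_of_tendsto' hderiv hint htend
  rw [this]; ring

lemma integral_exp_Ioc' {c : ℝ} (hc : c ≠ 0) (a b : ℝ) (hab : a ≤ b) :
    ∫ x in Ioc a b, exp (c * x) = (exp (c * b) - exp (c * a)) / c := by
  rw [← intervalIntegral.integral_of_le hab]
  have hderiv : ∀ x ∈ uIcc a b, HasDerivAt (fun y => exp (c * y) / c) (exp (c * x)) x := by
    intro x _
    have h := (((hasDerivAt_id x).const_mul c).exp).div_const c
    simpa [mul_comm, mul_div_assoc, mul_div_cancel_left₀ _ hc] using h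
  rw [intervalIntegral.integral_eq_sub_of_hasDerivAt hderiv
    ((continuous_exp.comp (continuous_const.mul continuous_id)).intervalIntegrable a b)]
  ring

lemma inner_integral {lam t_F t_T t x : ℝ} (hlam : 0 < lam)
    (hx : 0 ≤ x) (hxT : x ≤ t_T - t_F) :
    ∫ y in Ioi (0:ℝ), lam * exp (-(lam * y)) *
        max (exp (-lam * (t - t_F - x))) (exp (-lam * (t - t_T)) * exp (-lam * y))
      = exp (-lam * (t - t_T)) / 2 + exp (-lam * (t + t_T - 2*t_F - 2*x)) / 2 := by
  set y0 : ℝ := t_T - t_F - x with hy0def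
  have hy0 : 0 ≤ y0 := by simp [hy0def]; linarith
  set f : ℝ → ℝ := fun y => lam * exp (-(lam * y)) *
      max (exp (-lam * (t - t_F - x))) (exp (-lam * (t - t_T)) * exp (-lam * y)) with hf
  have hfc : Continuous f := by fun_prop
  have hint1 : IntegrableOn f (Ioc 0 y0) := hfc.integrableOn_Ioc
  have hint2 : IntegrableOn f (Ioi y0) := by
    have hb : IntegrableOn (fun y => exp (-lam * (t - t_T)) * (lam * exp (-(lam * y)))) (Ioi y0) := by
      apply Integrable.const_mul
      apply Integrable.const_mul
      exact (by simpa [neg_mul] using exp_neg_integrableOn_Ioi y0 hlam : IntegrableOn (fun x => rexp (-(lam * x))) (Ioi y0))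
    refine hb.mono' hfc.aestronglyMeasurable ?_
    filter_upwards [ae_restrict_mem measurableSet_Ioi] with y hy
    have h1 : max (exp (-lam * (t - t_F - x))) (exp (-lam * (t - t_T)) * exp (-lam * y))
        ≤ exp (-lam * (t - t_T)) := by
      apply max_le
      · apply exp_le_exp.2; nlinarith
      · calc exp (-lam * (t - t_T)) * exp (-lam * y) ≤ exp (-lam * (t - t_T)) * 1 := by
              apply mul_le_mul_of_nonneg_left _ (exp_pos _).le
              exact exp_le_one_iff.2 (by nlinarith [mem_Ioi.1 hy, hy0])
            _ = exp (-lam * (t - t_T)) := mul_one _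
    have h0 : 0 ≤ f y := by positivity
    rw [norm_of_nonneg h0, hf]
    calc lam * exp (-(lam * y)) * max _ _ ≤ lam * exp (-(lam * y)) * exp (-lam * (t - t_T)) := by
          apply mul_le_mul_of_nonneg_left h1 (by positivity)
        _ = exp (-lam * (t - t_T)) * (lam * exp (-(lam * y))) := by ring
  rw [← Ioc_union_Ioi_eq_Ioi hy0,
    setIntegral_union (Ioc_disjoint_Ioi le_rfl) measurableSet_Ioi hint1 hint2]
  have e1 : ∫ y in Ioc 0 y0, f y
      = ∫ y in Ioc 0 y0, lam * exp (-lam * (t - t_T)) * exp ((-2*lam) * y) := by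
    apply setIntegral_congr_fun measurableSet_Ioc
    intro y hy
    have hmax : max (exp (-lam * (t - t_F - x))) (exp (-lam * (t - t_T)) * exp (-lam * y))
        = exp (-lam * (t - t_T)) * exp (-lam * y) := by
      apply max_eq_right
      rw [← exp_add]
      apply exp_le_exp.2
      have := hy.2
      nlinarith
    rw [hf]; dsimp only; rw [hmax]
    rw [show lam * exp (-(lam * y)) * (exp (-lam * (t - t_T)) * exp (-lam * y))
        = lam * exp (-lam * (t - t_T)) * (exp (-(lam * y)) * exp (-lam * y)) by ring, ← exp_add]
    congr 2
    ring
  have e2 : ∫ y in Ioi y0, f y = ∫ y in Ioi y0, exp (-lam * (t - t_F - x)) * (lam * exp (-(lam * y))) := by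
    apply setIntegral_congr_fun measurableSet_Ioi
    intro y hy
    have hmax : max (exp (-lam * (t - t_F - x))) (exp (-lam * (t - t_T)) * exp (-lam * y))
        = exp (-lam * (t - t_F - x)) := by
      apply max_eq_left
      rw [← exp_add]
      apply exp_le_exp.2
      have := mem_Ioi.1 hy
      nlinarith
    rw [hf]; dsimp only; rw [hmax]; ring
  rw [e1, e2, integral_const_mul, integral_const_mul, integral_const_mul,
    integral_exp_Ioc' (by nlinarith : (-2*lam) ≠ 0) 0 y0 hy0,
    integral_exp_Ioi' hlam y0]
  have h1 : exp (-lam * (t - t_T)) * exp (-2 * lam * y0) = exp (-lam * (t + t_T - 2*t_F - 2*x)) := by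
    rw [← exp_add]; congr 1; rw [hy0def]; ring
  have h2 : exp (-lam * (t - t_F - x)) * exp (-(lam * y0)) = exp (-lam * (t + t_T - 2*t_F - 2*x)) := by
    rw [← exp_add]; congr 1; rw [hy0def]; ring
  have hl : lam ≠ 0 := ne_of_gt hlam
  field_simp
  simp only [mul_zero, neg_zero, exp_zero]
  ring_nf
  ring_nf at h1 h2
  linear_combination (-1) * h1 + 2 * h2

lemma outer_integral {mu lam t_F t_T t : ℝ} (hmu : 0 < mu) (hlam : 0 < lam)
    (hne : mu ≠ 2 * lam) (hFT : t_F < t_T) (hTt : t_T < t) :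
    ∫ x in Ioi (0:ℝ), mu * exp (-(mu * x)) *
        (if x < t_T - t_F then
          exp (-lam * (t - t_T)) / 2 + exp (-lam * (t + t_T - 2*t_F - 2*x)) / 2 else 0)
      = exp (-mu * (t_T - t_F)) * exp (-lam * (t - t_T)) * (1 / (2 - mu / lam) - 1)
        + exp (-lam * (t - t_T)) / 2
        + exp (-2 * lam * (t - t_F)) * exp (lam * (t - t_T))
            * (1 / 2 - 1 / (2 - mu / lam)) := by
  set T : ℝ := t_T - t_F with hT
  have hT0 : 0 < T := by simp [hT]; linarith
  set F : ℝ → ℝ := fun x => mu * exp (-(mu * x)) *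
      (exp (-lam * (t - t_T)) / 2 + exp (-lam * (t + t_T - 2*t_F - 2*x)) / 2) with hF
  have h1 : ∀ x : ℝ, mu * exp (-(mu * x)) *
      (if x < T then
        exp (-lam * (t - t_T)) / 2 + exp (-lam * (t + t_T - 2*t_F - 2*x)) / 2 else 0)
      = (Iio T).indicator F x := by
    intro x
    by_cases h : x < T <;> simp [indicator_apply, mem_Iio, h, hF]
  simp_rw [h1]
  rw [setIntegral_indicator measurableSet_Iio, Ioi_inter_Iio, ← integral_Ioc_eq_integral_Ioo]
  have h2 : ∀ x ∈ Ioc (0:ℝ) T, F x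
      = (mu * exp (-lam * (t - t_T)) / 2) * exp ((-mu) * x)
        + (mu * exp (-lam * (t + t_T - 2*t_F)) / 2) * exp ((2*lam - mu) * x) := by
    intro x _
    rw [hF]; dsimp only
    rw [show -lam * (t + t_T - 2*t_F - 2*x) = -lam * (t + t_T - 2*t_F) + (2*lam) * x by ring,
      exp_add, show -(mu*x) = (-mu) * x by ring,
      show (2*lam - mu) * x = (2*lam) * x + (-mu) * x by ring, exp_add]
    ring
  rw [setIntegral_congr_fun measurableSet_Ioc h2]
  have hmune : (-mu) ≠ 0 := neg_ne_zero.2 (ne_of_gt hmu)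
  have h2l : (2*lam - mu) ≠ 0 := sub_ne_zero.2 fun h => hne (by linarith)
  have hi1 : IntegrableOn (fun x => (mu * exp (-lam * (t - t_T)) / 2) * exp ((-mu) * x)) (Ioc 0 T) := by
    apply Continuous.integrableOn_Ioc; fun_prop
  have hi2 : IntegrableOn (fun x => (mu * exp (-lam * (t + t_T - 2*t_F)) / 2) * exp ((2*lam - mu) * x)) (Ioc 0 T) := by
    apply Continuous.integrableOn_Ioc; fun_prop
  rw [integral_add hi1 hi2, integral_const_mul, integral_const_mul,
    integral_exp_Ioc' hmune 0 T hT0.le, integral_exp_Ioc' h2l 0 T hT0.le]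
  have hlne : lam ≠ 0 := ne_of_gt hlam
  have hq : 2 - mu / lam = (2*lam - mu) / lam := by field_simp
  rw [hq, mul_zero, mul_zero, exp_zero]
  simp only [neg_mul]
  have r1 : exp (-(2 * lam * (t - t_F))) * exp (lam * (t - t_T)) = exp (-(lam * (t + t_T - 2*t_F))) := by
    rw [← exp_add]; congr 1; ring
  have r2 : exp (-(lam * (t + t_T - 2*t_F))) * exp ((2*lam - mu) * T) = exp (-(lam * (t - t_T))) * exp (-(mu * T)) := by
    rw [← exp_add, ← exp_add]; congr 1; rw [hT]; ring
  have h2l' : lam * 2 - mu ≠ 0 := by rwa [mul_comm] at h2l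
  field_simp
  ring_nf
  ring_nf at r1 r2
  have e3 : rexp (-(lam * t) - lam * t_T + lam * t_F * 2) = rexp (-(lam * t) + lam * t_F * 2 - lam * t_T) := by
    congr 1; ring
  linear_combination mu * r1 + mu * r2 + mu * (rexp (lam * T * 2 - mu * T) - 1) * e3

/-- **Expected survival estimate of a forked-and-terminated random walk.**
Same model as the CDF lemma: fork at `t_F`, first arrival time `A - t_F ~ exp(μ)`,
residual return time `E ~ exp(λ)`, termination at `t_T`, observation at `t > t_T`,
`μ ≠ 2λ`.  Then
`E[S] = exp(-μ(t_T-t_F)) exp(-λ(t-t_T)) (1/(2-μ/λ) - 1) + exp(-λ(t-t_T))/2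
        + exp(-2λ(t-t_F)) exp(λ(t-t_T)) (1/2 - 1/(2-μ/λ))`. -/
theorem forked_terminated_survival_expectation
    {Ω : Type*} [MeasurableSpace Ω] (μP : Measure Ω) [IsProbabilityMeasure μP]
    (mu lam t_F t_T t : ℝ) (hmu : 0 < mu) (hlam : 0 < lam) (hne : mu ≠ 2 * lam)
    (hFT : t_F < t_T) (hTt : t_T < t)
    (A E : Ω → ℝ) (hA : Measurable A) (hE : Measurable E)
    (hindep : IndepFun A E μP)
    (hlawA : Measure.map (fun ω => A ω - t_F) μP = expMeasure mu)
    (hlawE : Measure.map E μP = expMeasure lam)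
    (S : Ω → ℝ)
    (hS : S = fun ω => if A ω < t_T then
        max (exp (-lam * (t - A ω))) (exp (-lam * (t - t_T)) * exp (-lam * E ω))
      else 0) :
    ∫ ω, S ω ∂μP =
      exp (-mu * (t_T - t_F)) * exp (-lam * (t - t_T)) * (1 / (2 - mu / lam) - 1)
        + exp (-lam * (t - t_T)) / 2
        + exp (-2 * lam * (t - t_F)) * exp (lam * (t - t_T))
            * (1 / 2 - 1 / (2 - mu / lam)) := by
  haveI : IsProbabilityMeasure (expMeasure mu) := isProbabilityMeasure_expMeasure hmu
  haveI : IsProbabilityMeasure (expMeasure lam) := isProbabilityMeasure_expMeasure hlam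
  set g : ℝ × ℝ → ℝ := fun p => if p.1 < t_T - t_F then
      max (exp (-lam * (t - t_F - p.1))) (exp (-lam * (t - t_T)) * exp (-lam * p.2))
    else 0 with hg
  have hgm : Measurable g := by
    apply Measurable.ite (measurableSet_lt measurable_fst measurable_const) _ measurable_const
    fun_prop
  have hφ : Measurable (fun ω => (A ω - t_F, E ω)) := (hA.sub measurable_const).prodMk hE
  have hmap : μP.map (fun ω => (A ω - t_F, E ω)) = (expMeasure mu).prod (expMeasure lam) := by
    have hindep' : IndepFun (fun ω => A ω - t_F) E μP := by
      have := hindep.comp (show Measurable fun a : ℝ => a - t_F from measurable_id.sub measurable_const)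
        (measurable_id : Measurable (id : ℝ → ℝ))
      simpa [Function.comp_def] using this
    rw [← hlawA, ← hlawE]
    exact (indepFun_iff_map_prod_eq_prod_map_map (hA.sub measurable_const).aemeasurable
      hE.aemeasurable).1 hindep'
  have step1 : ∀ ω, S ω = g (A ω - t_F, E ω) := by
    intro ω
    rw [hS, hg]
    dsimp only
    rw [show t - t_F - (A ω - t_F) = t - A ω by ring]
    congr 1
    simp [sub_lt_sub_iff_right]
  have step2 : ∫ ω, S ω ∂μP = ∫ p, g p ∂((expMeasure mu).prod (expMeasure lam)) := by
    simp_rw [step1]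
    rw [← hmap, integral_map hφ.aemeasurable hgm.aestronglyMeasurable]
  have hz : ((expMeasure mu).prod (expMeasure lam)) {p : ℝ × ℝ | p.2 < 0} = 0 := by
    have hset : {p : ℝ × ℝ | p.2 < 0} = (univ : Set ℝ) ×ˢ Iio 0 := by
      ext p; simp
    rw [hset, Measure.prod_prod]
    have h0 : expMeasure lam (Iio 0) = 0 := by
      rw [show expMeasure lam = volume.withDensity (exponentialPDF lam) from rfl,
        withDensity_apply _ measurableSet_Iio]
      exact lintegral_exponentialPDF_of_nonpos le_rfl
    simp [h0]
  have hae2 : ∀ᵐ p ∂((expMeasure mu).prod (expMeasure lam)), 0 ≤ p.2 := by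
    rw [ae_iff]
    convert hz using 2
    ext p; simp [not_le]
  have hint : Integrable g ((expMeasure mu).prod (expMeasure lam)) := by
    apply (integrable_const (1:ℝ)).mono' hgm.aestronglyMeasurable
    filter_upwards [hae2] with p hp
    rw [hg]
    dsimp only
    split_ifs with h
    · have h0 : (0:ℝ) ≤ max (exp (-lam * (t - t_F - p.1)))
          (exp (-lam * (t - t_T)) * exp (-lam * p.2)) :=
        le_max_of_le_left (exp_pos _).le
      rw [norm_of_nonneg h0]
      apply max_le
      · exact exp_le_one_iff.2 (by nlinarith)
      · calc exp (-lam * (t - t_T)) * exp (-lam * p.2) ≤ 1 * 1 := by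
              apply mul_le_mul (exp_le_one_iff.2 (by nlinarith))
                (exp_le_one_iff.2 (by nlinarith)) (exp_pos _).le zero_le_one
          _ = 1 := mul_one 1
    · simp
  rw [step2, integral_prod _ hint, integral_expMeasure_eq hmu]
  have step3 : ∀ x ∈ Ioi (0:ℝ),
      mu * exp (-(mu * x)) * (∫ y, g (x, y) ∂(expMeasure lam))
      = mu * exp (-(mu * x)) *
        (if x < t_T - t_F then
          exp (-lam * (t - t_T)) / 2 + exp (-lam * (t + t_T - 2*t_F - 2*x)) / 2 else 0) := by
    intro x hx
    congr 1
    by_cases h : x < t_T - t_F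
    · rw [if_pos h]
      have : ∀ y : ℝ, g (x, y)
          = max (exp (-lam * (t - t_F - x))) (exp (-lam * (t - t_T)) * exp (-lam * y)) := by
        intro y; rw [hg]; exact if_pos h
      simp_rw [this]
      rw [integral_expMeasure_eq hlam]
      exact inner_integral hlam (le_of_lt (mem_Ioi.1 hx)) h.le
    · rw [if_neg h]
      have : ∀ y : ℝ, g (x, y) = 0 := by
        intro y; rw [hg]; exact if_neg h
      simp_rw [this]
      exact integral_zero _ _
  rw [setIntegral_congr_fun measurableSet_Ioi step3]
  exact outer_integral hmu hlam hne hFT hTt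
end

section
/- Let m walks fail at time tau, each contributing a survival estimate uniformly distributed on [0, exp(-lambda (t - tau))] at time t >= tau, independent of a active walks each contributing a uniform(0,1) estimate. For any eps with 0 < eps < theta - 1/2, the probability that the total estimate (excluding the visiting walk's 1/2) is below theta - 1/2 is at least F_IH_{a-1}(eps) * F_IH_m((theta - eps - 1/2) * exp(lambda (t - tau))), where F_IH_k denotes the Irwin-Hall CDF of k standard uniforms. -/
open MeasureTheory ProbabilityTheory Real

/-- The Irwin–Hall CDF (distribution of the sum of `k` i.i.d. standard uniforms). -/
noncomputable def irwinHallCDF (k : ℕ) (σ : ℝ) : ℝ :=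
  if σ < 0 then 0
  else if σ ≤ (k : ℝ) then
    (1 / (Nat.factorial k : ℝ)) *
      ∑ τ ∈ Finset.range (⌊σ⌋₊ + 1), (-1 : ℝ) ^ τ * (k.choose τ) * (σ - τ) ^ k
  else 1

namespace IHAux

/-- A "global" version of the Irwin–Hall CDF, with positive parts. -/
noncomputable def G (k : ℕ) (x : ℝ) : ℝ :=
  if x < 0 then 0
  else (∑ τ ∈ Finset.range (k + 1), (-1 : ℝ) ^ τ * (k.choose τ) * max (x - τ) 0 ^ k) /
    (k.factorial : ℝ)

lemma G_zero (x : ℝ) : G 0 x = if x < 0 then 0 else 1 := by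
  simp [G]

lemma G_succ (k : ℕ) (x : ℝ) :
    G (k + 1) x =
      (∑ τ ∈ Finset.range (k + 2), (-1 : ℝ) ^ τ * ((k + 1).choose τ) * max (x - τ) 0 ^ (k + 1)) /
        ((k + 1).factorial : ℝ) := by
  rw [G]
  split_ifs with h
  · symm
    rw [Finset.sum_eq_zero, zero_div]
    intro τ _
    have hτ0 : (0 : ℝ) ≤ τ := Nat.cast_nonneg τ
    have hmax : max (x - τ) 0 = 0 := max_eq_right (by linarith)
    simp [hmax]
  · rfl

lemma G_succ_continuous (k : ℕ) : Continuous (G (k + 1)) := by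
  have h : G (k + 1) = fun x : ℝ =>
      (∑ τ ∈ Finset.range (k + 2), (-1 : ℝ) ^ τ * ((k + 1).choose τ) * max (x - τ) 0 ^ (k + 1)) /
        ((k + 1).factorial : ℝ) := funext (G_succ k)
  rw [h]
  apply Continuous.div_const
  apply continuous_finset_sum
  intro τ _
  exact continuous_const.mul (((continuous_id.sub continuous_const).max continuous_const).pow _)

lemma G_measurable (k : ℕ) : Measurable (G k) := by
  cases k with
  | zero =>
    have h : G 0 = fun x : ℝ => if x < 0 then (0 : ℝ) else 1 := funext G_zero
    rw [h]
    exact Measurable.ite (measurableSet_lt measurable_id measurable_const)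
      measurable_const measurable_const
  | succ k => exact (G_succ_continuous k).measurable

lemma integral_maxpow (k : ℕ) (y : ℝ) :
    ∫ v in (0 : ℝ)..y, max v 0 ^ (k + 1) = max y 0 ^ (k + 2) / (k + 2) := by
  rcases le_or_gt 0 y with hy | hy
  · have h1 : Set.EqOn (fun v => max v 0 ^ (k + 1)) (fun v => v ^ (k + 1)) (Set.uIcc 0 y) := by
      intro v hv
      rw [Set.uIcc_of_le hy] at hv
      simp [max_eq_left hv.1]
    rw [intervalIntegral.integral_congr h1, integral_pow, max_eq_left hy,
      zero_pow (by omega : k + 1 + 1 ≠ 0)]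
    push_cast
    ring
  · have h1 : Set.EqOn (fun v => max v 0 ^ (k + 1)) (fun _ => (0 : ℝ)) (Set.uIcc 0 y) := by
      intro v hv
      rw [Set.uIcc_of_ge hy.le] at hv
      simp [max_eq_right hv.2, zero_pow (Nat.succ_ne_zero k)]
    rw [intervalIntegral.integral_congr h1]
    simp [max_eq_right hy.le, zero_pow (by omega : k + 2 ≠ 0)]

lemma integral_maxpow' (k : ℕ) (c : ℝ) :
    ∫ u in (0 : ℝ)..1, max (c - u) 0 ^ (k + 1)
      = (max c 0 ^ (k + 2) - max (c - 1) 0 ^ (k + 2)) / (k + 2) := by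
  have hc : Continuous fun v : ℝ => max v 0 ^ (k + 1) :=
    (continuous_id.max continuous_const).pow _
  have h1 := intervalIntegral.integral_comp_sub_left (a := 0) (b := 1)
    (fun v => max v 0 ^ (k + 1)) c
  rw [h1, sub_zero]
  have h2 : (∫ v in (c - 1)..c, max v 0 ^ (k + 1))
      = (∫ v in (0 : ℝ)..c, max v 0 ^ (k + 1)) - ∫ v in (0 : ℝ)..(c - 1), max v 0 ^ (k + 1) :=
    (intervalIntegral.integral_interval_sub_left (hc.intervalIntegrable _ _)
      (hc.intervalIntegrable _ _)).symm
  rw [h2, integral_maxpow, integral_maxpow]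
  ring

lemma sum_pascal (n : ℕ) (M : ℕ → ℝ) :
    ∑ τ ∈ Finset.range (n + 1), (-1 : ℝ) ^ τ * (n.choose τ) * (M τ - M (τ + 1))
      = ∑ τ ∈ Finset.range (n + 2), (-1 : ℝ) ^ τ * ((n + 1).choose τ) * M τ := by
  have hL1 : ∑ τ ∈ Finset.range (n + 1), (-1 : ℝ) ^ τ * (n.choose τ) * M τ
      = M 0 - ∑ i ∈ Finset.range (n + 1), (-1 : ℝ) ^ i * (n.choose (i + 1)) * M (i + 1) := by
    rw [Finset.sum_range_succ' (fun τ => (-1 : ℝ) ^ τ * (n.choose τ) * M τ) n,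
      Finset.sum_range_succ (fun i => (-1 : ℝ) ^ i * (n.choose (i + 1) : ℝ) * M (i + 1)) n,
      Nat.choose_eq_zero_of_lt (Nat.lt_succ_self n)]
    have h : ∀ i ∈ Finset.range n, (-1 : ℝ) ^ (i + 1) * (n.choose (i + 1)) * M (i + 1)
        = -((-1 : ℝ) ^ i * (n.choose (i + 1)) * M (i + 1)) := by
      intro i _; ring
    rw [Finset.sum_congr rfl h, Finset.sum_neg_distrib]
    simp only [Nat.choose_zero_right, Nat.cast_one, pow_zero]
    ring
  have e1 : ∑ τ ∈ Finset.range (n + 1), (-1 : ℝ) ^ τ * (n.choose τ) * (M τ - M (τ + 1))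
      = (∑ τ ∈ Finset.range (n + 1), (-1 : ℝ) ^ τ * (n.choose τ) * M τ)
        - ∑ τ ∈ Finset.range (n + 1), (-1 : ℝ) ^ τ * (n.choose τ) * M (τ + 1) := by
    rw [← Finset.sum_sub_distrib]
    exact Finset.sum_congr rfl fun i _ => by ring
  have e2 : ∑ τ ∈ Finset.range (n + 2), (-1 : ℝ) ^ τ * ((n + 1).choose τ) * M τ
      = M 0 - (∑ τ ∈ Finset.range (n + 1), (-1 : ℝ) ^ τ * (n.choose τ) * M (τ + 1))
        - ∑ i ∈ Finset.range (n + 1), (-1 : ℝ) ^ i * (n.choose (i + 1)) * M (i + 1) := by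
    rw [Finset.sum_range_succ' (fun τ => (-1 : ℝ) ^ τ * ((n + 1).choose τ) * M τ) (n + 1)]
    have h : ∀ i ∈ Finset.range (n + 1),
        (-1 : ℝ) ^ (i + 1) * ((n + 1).choose (i + 1)) * M (i + 1)
        = -((-1 : ℝ) ^ i * (n.choose i) * M (i + 1))
          - (-1 : ℝ) ^ i * (n.choose (i + 1)) * M (i + 1) := by
      intro i _
      rw [Nat.choose_succ_succ]
      push_cast
      ring
    rw [Finset.sum_congr rfl h, Finset.sum_sub_distrib, Finset.sum_neg_distrib]
    simp only [Nat.choose_zero_right, Nat.cast_one, pow_zero]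
    ring
  rw [e1, e2, hL1]
  ring

lemma G_rec (k : ℕ) (x : ℝ) :
    (∫ u in (0 : ℝ)..1, G k (x - u)) = G (k + 1) x := by
  cases k with
  | zero =>
    have hi : (fun u => G 0 (x - u))
        = fun u => Set.indicator {u : ℝ | u ≤ x} (fun _ => (1 : ℝ)) u := by
      funext u
      rw [G_zero, Set.indicator_apply]
      by_cases h : u ≤ x
      · rw [if_pos (show u ∈ {u : ℝ | u ≤ x} from h), if_neg (by push_neg; linarith)]
      · rw [if_neg (show u ∉ {u : ℝ | u ≤ x} from h), if_pos (by push_neg at h; linarith)]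
    rcases lt_or_ge x 0 with hx | hx
    · have h1 : Set.EqOn (fun u => G 0 (x - u)) (fun _ => (0 : ℝ)) (Set.uIcc 0 1) := by
        intro u hu
        rw [Set.uIcc_of_le (by norm_num : (0:ℝ) ≤ 1)] at hu
        show G 0 (x - u) = 0
        rw [G_zero, if_pos (by linarith [hu.1])]
      rw [intervalIntegral.integral_congr h1]
      simp [G, hx]
    · rcases le_or_gt x 1 with hx1 | hx1
      · rw [hi, intervalIntegral.integral_indicator (⟨hx, hx1⟩ : x ∈ Set.Icc (0:ℝ) 1)]
        simp only [intervalIntegral.integral_const, smul_eq_mul, mul_one, sub_zero]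
        rw [G_succ]
        rw [Finset.sum_range_succ, Finset.sum_range_succ, Finset.sum_range_zero]
        have h1 : max (x - (0:ℕ)) 0 = x := by
          rw [Nat.cast_zero, sub_zero]; exact max_eq_left hx
        have h2 : max (x - (1:ℕ)) 0 = 0 := by
          rw [Nat.cast_one]; exact max_eq_right (by linarith)
        rw [h1, h2]
        norm_num
      · have h1 : Set.EqOn (fun u => G 0 (x - u)) (fun _ => (1 : ℝ)) (Set.uIcc 0 1) := by
          intro u hu
          rw [Set.uIcc_of_le (by norm_num : (0:ℝ) ≤ 1)] at hu
          show G 0 (x - u) = 1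
          rw [G_zero, if_neg (by push_neg; linarith [hu.2])]
        rw [intervalIntegral.integral_congr h1]
        simp only [intervalIntegral.integral_const, smul_eq_mul, mul_one, sub_zero]
        rw [G_succ]
        rw [Finset.sum_range_succ, Finset.sum_range_succ, Finset.sum_range_zero]
        have h1 : max (x - (0:ℕ)) 0 = x := by
          rw [Nat.cast_zero, sub_zero]; exact max_eq_left (by linarith)
        have h2 : max (x - (1:ℕ)) 0 = x - 1 := by
          rw [Nat.cast_one]; exact max_eq_left (by linarith)
        rw [h1, h2]
        norm_num
  | succ k =>
    simp only [G_succ]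
    rw [show k + 1 + 2 = k + 3 from by omega, show k + 1 + 1 = k + 2 from by omega,
      intervalIntegral.integral_div]
    have hcont : ∀ τ : ℕ, Continuous fun u : ℝ =>
        (-1 : ℝ) ^ τ * ((k + 1).choose τ) * max (x - u - τ) 0 ^ (k + 1) := by
      intro τ
      exact continuous_const.mul
        ((((continuous_const.sub continuous_id).sub continuous_const).max continuous_const).pow _)
    rw [intervalIntegral.integral_finset_sum
      (fun τ _ => (hcont τ).intervalIntegrable 0 1)]
    have hterm : ∀ τ ∈ Finset.range (k + 2),
        (∫ u in (0:ℝ)..1, (-1 : ℝ) ^ τ * ((k + 1).choose τ) * max (x - u - τ) 0 ^ (k + 1))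
        = (-1 : ℝ) ^ τ * ((k + 1).choose τ) *
          ((max (x - τ) 0 ^ (k + 2) - max (x - τ - 1) 0 ^ (k + 2)) / (k + 2)) := by
      intro τ _
      rw [intervalIntegral.integral_const_mul]
      congr 1
      have h := integral_maxpow' k (x - τ)
      have heq : (fun u : ℝ => max (x - u - τ) 0 ^ (k + 1))
          = fun u : ℝ => max (x - τ - u) 0 ^ (k + 1) := by
        funext u; rw [sub_right_comm]
      rw [heq, h]
    rw [Finset.sum_congr rfl hterm]
    have hM := sum_pascal (k + 1) (fun τ => max (x - τ) 0 ^ (k + 2))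
    have hM' : ∑ τ ∈ Finset.range (k + 2),
        (-1 : ℝ) ^ τ * ((k + 1).choose τ) *
          (max (x - τ) 0 ^ (k + 2) - max (x - τ - 1) 0 ^ (k + 2))
        = ∑ τ ∈ Finset.range (k + 3), (-1 : ℝ) ^ τ * ((k + 2).choose τ) * max (x - τ) 0 ^ (k + 2) := by
      have hcast : ∀ τ : ℕ, max (x - τ - 1) 0 = max (x - ((τ + 1 : ℕ) : ℝ)) 0 := by
        intro τ; push_cast; rw [sub_sub]
      calc ∑ τ ∈ Finset.range (k + 2),
            (-1 : ℝ) ^ τ * ((k + 1).choose τ) *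
              (max (x - τ) 0 ^ (k + 2) - max (x - τ - 1) 0 ^ (k + 2))
          = ∑ τ ∈ Finset.range (k + 2), (-1 : ℝ) ^ τ * ((k + 1).choose τ) *
              ((fun τ : ℕ => max (x - τ) 0 ^ (k + 2)) τ
                - (fun τ : ℕ => max (x - τ) 0 ^ (k + 2)) (τ + 1)) := by
            refine Finset.sum_congr rfl fun τ _ => ?_
            simp only
            rw [hcast τ]
        _ = ∑ τ ∈ Finset.range (k + 3), (-1 : ℝ) ^ τ * ((k + 2).choose τ) * max (x - τ) 0 ^ (k + 2) := hM
    have hfac : ((k + 2).factorial : ℝ) = (k + 2) * ((k + 1).factorial : ℝ) := by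
      rw [Nat.factorial_succ (k + 1)]
      push_cast
      ring
    have hstep : ∑ τ ∈ Finset.range (k + 2),
        (-1 : ℝ) ^ τ * ((k + 1).choose τ) *
          ((max (x - τ) 0 ^ (k + 2) - max (x - τ - 1) 0 ^ (k + 2)) / (k + 2))
        = (∑ τ ∈ Finset.range (k + 3),
            (-1 : ℝ) ^ τ * ((k + 2).choose τ) * max (x - τ) 0 ^ (k + 2)) / (k + 2) := by
      rw [← hM', Finset.sum_div]
      exact Finset.sum_congr rfl fun τ _ => by ring
    rw [hstep, hfac]
    have h2 : (0:ℝ) < (k:ℝ) + 2 := by positivity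
    have h3 : ((k + 1).factorial : ℝ) ≠ 0 := by
      exact_mod_cast Nat.cast_ne_zero.mpr (Nat.factorial_ne_zero (k + 1))
    field_simp

lemma G_bounds (k : ℕ) : ∀ x : ℝ, 0 ≤ G k x ∧ G k x ≤ 1 := by
  induction k with
  | zero => intro x; rw [G_zero]; split_ifs <;> norm_num
  | succ k ih =>
    intro x
    have hInt : IntervalIntegrable (fun u => G k (x - u)) volume 0 1 := by
      have hm : Measurable fun u => G k (x - u) :=
        (G_measurable k).comp (measurable_const.sub measurable_id)
      rw [intervalIntegrable_iff_integrableOn_Ioc_of_le (by norm_num)]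
      refine Integrable.mono' (integrable_const 1) hm.aestronglyMeasurable ?_
      exact Filter.Eventually.of_forall fun u => by
        rw [Real.norm_eq_abs, abs_of_nonneg (ih _).1]; exact (ih _).2
    constructor
    · rw [← G_rec]
      exact intervalIntegral.integral_nonneg (by norm_num) fun u _ => (ih _).1
    · rw [← G_rec]
      calc (∫ u in (0:ℝ)..1, G k (x - u)) ≤ ∫ _ in (0:ℝ)..1, (1:ℝ) :=
            intervalIntegral.integral_mono_on (by norm_num) hInt
              intervalIntegrable_const (fun u _ => (ih _).2)
        _ = 1 := by simp

lemma irwinHall_eq_G (k : ℕ) (x : ℝ) (hx : 0 < x) (hxk : x ≤ (k : ℝ)) :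
    irwinHallCDF k x = G k x := by
  have hk : k ≠ 0 := by
    rintro rfl
    simp only [Nat.cast_zero] at hxk
    linarith
  rw [irwinHallCDF, if_neg (not_lt.2 hx.le), if_pos hxk, G, if_neg (not_lt.2 hx.le)]
  have hfk : ⌊x⌋₊ ≤ k := by
    have h := Nat.floor_le_floor hxk
    simpa using h
  have hsub : Finset.range (⌊x⌋₊ + 1) ⊆ Finset.range (k + 1) :=
    Finset.range_subset_range.2 (by omega)
  have hzero : ∀ τ ∈ Finset.range (k + 1), τ ∉ Finset.range (⌊x⌋₊ + 1) →
      (-1 : ℝ) ^ τ * (k.choose τ) * max (x - τ) 0 ^ k = 0 := by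
    intro τ _ hτ
    rw [Finset.mem_range, not_lt] at hτ
    have hτx : x < τ := by
      have h1 : x < ⌊x⌋₊ + 1 := Nat.lt_floor_add_one x
      have h2 : ((⌊x⌋₊ + 1 : ℕ) : ℝ) ≤ τ := by exact_mod_cast hτ
      push_cast at h2
      linarith
    rw [max_eq_right (by linarith), zero_pow hk, mul_zero]
  have h1 : ∑ τ ∈ Finset.range (k + 1), (-1 : ℝ) ^ τ * (k.choose τ) * max (x - τ) 0 ^ k
      = ∑ τ ∈ Finset.range (⌊x⌋₊ + 1), (-1 : ℝ) ^ τ * (k.choose τ) * max (x - τ) 0 ^ k :=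
    (Finset.sum_subset hsub hzero).symm
  have h2 : ∀ τ ∈ Finset.range (⌊x⌋₊ + 1),
      (-1 : ℝ) ^ τ * (k.choose τ) * max (x - τ) 0 ^ k
      = (-1 : ℝ) ^ τ * (k.choose τ) * (x - τ) ^ k := by
    intro τ hτ
    rw [Finset.mem_range] at hτ
    have hτx : (τ : ℝ) ≤ x := by
      have h3 : (τ : ℝ) ≤ ⌊x⌋₊ := by exact_mod_cast Nat.lt_succ_iff.1 hτ
      have h4 : (⌊x⌋₊ : ℝ) ≤ x := Nat.floor_le hx.le
      linarith
    rw [max_eq_left (by linarith)]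
  rw [h1, Finset.sum_congr rfl h2]
  ring

lemma irwinHall_nonneg (k : ℕ) (x : ℝ) (hx : 0 < x) : 0 ≤ irwinHallCDF k x := by
  rcases le_or_gt x (k : ℝ) with h | h
  · rw [irwinHall_eq_G k x hx h]; exact (G_bounds k x).1
  · rw [irwinHallCDF, if_neg (not_lt.2 hx.le), if_neg (not_le.2 h)]; norm_num

lemma iIndepFun_precomp {Ω ι ι' : Type*} [MeasurableSpace Ω] {μ : Measure Ω}
    {β : Type*} [mβ : MeasurableSpace β] {f : ι → Ω → β} {g : ι' → ι}
    (hg : Function.Injective g) (h : iIndepFun f μ) :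
    iIndepFun (fun i => f (g i)) μ := by
  rw [iIndepFun_iff_measure_inter_preimage_eq_mul] at h ⊢
  intro S sets hsets
  classical
  have key := h (S.image g) (sets := Function.extend g sets fun _ => Set.univ) ?_
  · have h1 : (⋂ i ∈ S.image g, f i ⁻¹' Function.extend g sets (fun _ => Set.univ) i)
        = ⋂ i ∈ S, f (g i) ⁻¹' sets i := by
      rw [Finset.set_biInter_finset_image]
      exact Set.iInter₂_congr fun i _ => by rw [hg.extend_apply]
    have h2 : ∏ i ∈ S.image g, μ (f i ⁻¹' Function.extend g sets (fun _ => Set.univ) i)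
        = ∏ i ∈ S, μ (f (g i) ⁻¹' sets i) := by
      rw [Finset.prod_image (fun a _ b _ hab => hg hab)]
      exact Finset.prod_congr rfl fun i _ => by rw [hg.extend_apply]
    rw [h1, h2] at key
    exact key
  · intro i hi
    rcases Finset.mem_image.1 hi with ⟨j, hj, rfl⟩
    rw [hg.extend_apply]
    exact hsets j hj

lemma law_sum {Ω : Type*} [MeasurableSpace Ω] (μ : Measure Ω) [IsProbabilityMeasure μ] :
    ∀ (k : ℕ) (Y : Fin k → Ω → ℝ), (∀ i, Measurable (Y i)) →
      iIndepFun Y μ →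
      (∀ i, μ.map (Y i) = volume.restrict (Set.Icc (0:ℝ) 1)) →
      ∀ x : ℝ, μ {ω | ∑ i, Y i ω ≤ x} = ENNReal.ofReal (G k x) := by
  intro k
  induction k with
  | zero =>
    intro Y _ _ _ x
    rw [G_zero]
    rcases lt_or_ge x 0 with hx | hx
    · have h : {ω : Ω | ∑ i : Fin 0, Y i ω ≤ x} = ∅ := by
        ext ω; simp [hx.not_ge]
      rw [h, if_pos hx]
      simp
    · have h : {ω : Ω | ∑ i : Fin 0, Y i ω ≤ x} = Set.univ := by
        ext ω; simp [hx]
      rw [h, if_neg (not_lt.2 hx), measure_univ]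
      simp
  | succ k ih =>
    intro Y hm hind hmap x
    classical
    set s : Finset (Fin (k + 1)) := Finset.univ.image Fin.castSucc with hs
    have hinj : Function.Injective (Fin.castSucc : Fin k → Fin (k + 1)) :=
      Fin.castSucc_injective k
    have hlast : Fin.last k ∉ s := by
      simp only [hs, Finset.mem_image, Finset.mem_univ, true_and, not_exists]
      intro i
      exact (Fin.castSucc_lt_last i).ne
    have hT : IndepFun (∑ j ∈ s, Y j) (Y (Fin.last k)) μ :=
      hind.indepFun_finsetSum_of_notMem hm hlast
    set T : Ω → ℝ := fun ω => ∑ i : Fin k, Y (Fin.castSucc i) ω with hTdef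
    have hTeq : (∑ j ∈ s, Y j) = T := by
      funext ω
      rw [Finset.sum_apply, hs, Finset.sum_image (fun a _ b _ hab => hinj hab)]
    rw [hTeq] at hT
    have hTm : Measurable T := Finset.measurable_sum _ fun i _ => hm _
    have hU : Measurable (Y (Fin.last k)) := hm _
    have hset : {ω | ∑ i, Y i ω ≤ x}
        = (fun ω => (T ω, Y (Fin.last k) ω)) ⁻¹' {p : ℝ × ℝ | p.1 + p.2 ≤ x} := by
      ext ω
      simp only [Set.mem_setOf_eq, Set.mem_preimage, hTdef, Fin.sum_univ_castSucc]
    rw [hset]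
    have hmeasS : MeasurableSet {p : ℝ × ℝ | p.1 + p.2 ≤ x} :=
      measurableSet_le (measurable_fst.add measurable_snd) measurable_const
    rw [← Measure.map_apply (hTm.prodMk hU) hmeasS,
      (indepFun_iff_map_prod_eq_prod_map_map hTm.aemeasurable hU.aemeasurable).1 hT,
      hmap (Fin.last k)]
    haveI : IsProbabilityMeasure (μ.map T) := Measure.isProbabilityMeasure_map hTm.aemeasurable
    rw [Measure.prod_apply_symm hmeasS]
    have hTlaw : ∀ y : ℝ, (μ.map T) (Set.Iic y) = ENNReal.ofReal (G k y) := by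
      intro y
      rw [Measure.map_apply hTm measurableSet_Iic]
      have hi2 : iIndepFun (fun i : Fin k => Y (Fin.castSucc i)) μ :=
        iIndepFun_precomp hinj hind
      exact ih (fun i => Y (Fin.castSucc i)) (fun i => hm _) hi2 (fun i => hmap _) y
    have hslice : ∀ u : ℝ,
        ((fun t : ℝ => (t, u)) ⁻¹' {p : ℝ × ℝ | p.1 + p.2 ≤ x}) = Set.Iic (x - u) := by
      intro u
      ext v
      simp only [Set.mem_preimage, Set.mem_setOf_eq, Set.mem_Iic]
      constructor <;> intro <;> linarith
    have hlint : (∫⁻ u, (μ.map T) ((fun t : ℝ => (t, u)) ⁻¹' {p : ℝ × ℝ | p.1 + p.2 ≤ x})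
          ∂(volume.restrict (Set.Icc (0:ℝ) 1)))
        = ∫⁻ u, ENNReal.ofReal (G k (x - u)) ∂(volume.restrict (Set.Icc (0:ℝ) 1)) := by
      refine lintegral_congr fun u => ?_
      rw [hslice u, hTlaw]
    rw [hlint]
    have hm2 : Measurable fun u : ℝ => G k (x - u) :=
      (G_measurable k).comp (measurable_const.sub measurable_id)
    have hInt : Integrable (fun u => G k (x - u)) (volume.restrict (Set.Icc (0:ℝ) 1)) := by
      refine Integrable.mono' (integrable_const 1) hm2.aestronglyMeasurable ?_
      exact Filter.Eventually.of_forall fun u => by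
        rw [Real.norm_eq_abs, abs_of_nonneg (G_bounds k _).1]; exact (G_bounds k _).2
    rw [← ofReal_integral_eq_lintegral_ofReal hInt
      (Filter.Eventually.of_forall fun u => (G_bounds k _).1)]
    congr 1
    rw [← G_rec k x, intervalIntegral.integral_of_le (by norm_num : (0:ℝ) ≤ 1)]
    exact integral_Icc_eq_integral_Ioc

lemma prob_le {Ω : Type*} [MeasurableSpace Ω] (μ : Measure Ω) [IsProbabilityMeasure μ]
    (k : ℕ) (Y : Fin k → Ω → ℝ) (hm : ∀ i, Measurable (Y i))
    (hi : iIndepFun Y μ)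
    (hu : ∀ i, μ.map (Y i) = volume.restrict (Set.Icc (0:ℝ) 1)) (x : ℝ) (hx : 0 < x) :
    ENNReal.ofReal (irwinHallCDF k x) ≤ μ {ω | ∑ i, Y i ω ≤ x} := by
  rcases le_or_gt x (k : ℝ) with h | h
  · rw [law_sum μ k Y hm hi hu x, irwinHall_eq_G k x hx h]
  · rw [irwinHallCDF, if_neg (not_lt.2 hx.le), if_neg (not_le.2 h)]
    have hcompl : {ω | ∑ i, Y i ω ≤ x}ᶜ ⊆ ⋃ i : Fin k, {ω | 1 < Y i ω} := by
      intro ω hω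
      simp only [Set.mem_compl_iff, Set.mem_setOf_eq, not_le] at hω
      by_contra hmem
      simp only [Set.mem_iUnion, Set.mem_setOf_eq, not_exists, not_lt] at hmem
      have hsum : ∑ i, Y i ω ≤ (k : ℝ) := by
        calc ∑ i, Y i ω ≤ ∑ _i : Fin k, (1 : ℝ) :=
              Finset.sum_le_sum fun i _ => hmem i
          _ = (k : ℝ) := by simp
      linarith
    have hnull : ∀ i : Fin k, μ {ω | 1 < Y i ω} = 0 := by
      intro i
      have h1 : {ω | 1 < Y i ω} = Y i ⁻¹' Set.Ioi 1 := rfl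
      rw [h1, ← Measure.map_apply (hm i) measurableSet_Ioi, hu i,
        Measure.restrict_apply measurableSet_Ioi]
      have h2 : Set.Ioi (1:ℝ) ∩ Set.Icc 0 1 = ∅ := by
        apply Set.eq_empty_iff_forall_notMem.2
        rintro y ⟨hy1, _, hy3⟩
        rw [Set.mem_Ioi] at hy1
        linarith
      rw [h2]
      simp
    have hc0 : μ ({ω | ∑ i, Y i ω ≤ x}ᶜ) = 0 :=
      measure_mono_null hcompl (measure_iUnion_null hnull)
    have hmeasset : MeasurableSet {ω | ∑ i, Y i ω ≤ x} :=
      measurableSet_le (Finset.measurable_sum _ fun i _ => hm i) measurable_const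
    have h10 : (1 : ENNReal) - μ {ω | ∑ i, Y i ω ≤ x} = 0 := by
      rw [← measure_univ (μ := μ), ← measure_compl hmeasset (measure_ne_top μ _)]
      exact hc0
    have : μ {ω | ∑ i, Y i ω ≤ x} = 1 :=
      le_antisymm prob_le_one (tsub_eq_zero_iff_le.1 h10)
    rw [this]
    simp

lemma map_scaled {Ω : Type*} [MeasurableSpace Ω] (μ : Measure Ω) {V : Ω → ℝ}
    (hV : Measurable V) {c : ℝ} (hc : 0 < c)
    (hmap : μ.map V = (ENNReal.ofReal c)⁻¹ • volume.restrict (Set.Icc 0 c)) :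
    μ.map (fun ω => c⁻¹ * V ω) = volume.restrict (Set.Icc (0:ℝ) 1) := by
  have h1 : (fun ω => c⁻¹ * V ω) = (fun y => c⁻¹ * y) ∘ V := rfl
  rw [h1, ← Measure.map_map (measurable_const_mul c⁻¹) hV, hmap, Measure.map_smul]
  have hpre : Set.Icc (0:ℝ) c = (fun y => c⁻¹ * y) ⁻¹' Set.Icc (0:ℝ) 1 := by
    ext y
    simp only [Set.mem_Icc, Set.mem_preimage]
    have hinv : c⁻¹ * c = 1 := inv_mul_cancel₀ hc.ne'
    have hinvpos : 0 < c⁻¹ := inv_pos.2 hc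
    constructor
    · rintro ⟨h0, h1'⟩
      constructor
      · positivity
      · nlinarith
    · rintro ⟨h0, h1'⟩
      constructor
      · nlinarith
      · nlinarith
  rw [hpre, ← Measure.restrict_map (measurable_const_mul c⁻¹) measurableSet_Icc,
    Real.map_volume_mul_left (inv_ne_zero hc.ne'), inv_inv, abs_of_pos hc,
    Measure.restrict_smul, smul_smul,
    ENNReal.inv_mul_cancel (ENNReal.ofReal_pos.2 hc).ne' ENNReal.ofReal_ne_top, one_smul]

end IHAux

/-- **Lower bound on the forking-detection probability after a failure.**
`m` walks fail at time `τ`; at time `t ≥ τ` each contributes a survival estimate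
uniform on `[0, exp (-λ (t - τ))]`, independent of `a - 1` remaining active walks
(excluding the visiting one), each contributing a uniform `(0,1)` estimate.  For any
`0 < ε < θ - 1/2`, the probability that the total estimate is below `θ - 1/2` is at
least `F_IH_{a-1}(ε) * F_IH_m((θ - ε - 1/2) exp (λ (t - τ)))`. -/
theorem failure_detection_probability
    {Ω : Type*} [MeasurableSpace Ω] (μP : Measure Ω) [IsProbabilityMeasure μP]
    (a m : ℕ) (ha : 1 ≤ a) (lam τ t θ ε : ℝ) (hlam : 0 < lam) (hτ : τ ≤ t)
    (hε : 0 < ε) (hεθ : ε < θ - 1 / 2)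
    (X : (Fin (a - 1) ⊕ Fin m) → Ω → ℝ) (hmeas : ∀ i, Measurable (X i))
    (hindep : iIndepFun X μP)
    (hunifU : ∀ i : Fin (a - 1), Measure.map (X (Sum.inl i)) μP =
      volume.restrict (Set.Icc (0 : ℝ) 1))
    (hunifV : ∀ j : Fin m, Measure.map (X (Sum.inr j)) μP =
      (ENNReal.ofReal (exp (-lam * (t - τ))))⁻¹ •
        volume.restrict (Set.Icc (0 : ℝ) (exp (-lam * (t - τ))))) :
    irwinHallCDF (a - 1) ε * irwinHallCDF m ((θ - ε - 1 / 2) * exp (lam * (t - τ)))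
      ≤ (μP {ω | (∑ i, X (Sum.inl i) ω) + ∑ j, X (Sum.inr j) ω ≤ θ - 1 / 2}).toReal := by
  classical
  set c : ℝ := exp (-lam * (t - τ)) with hc
  have hcpos : 0 < c := exp_pos _
  have hinvc : c⁻¹ = exp (lam * (t - τ)) := by
    rw [hc, ← Real.exp_neg]
    ring_nf
  set s₂ : ℝ := (θ - ε - 1 / 2) * exp (lam * (t - τ)) with hs₂
  have hθ2 : 0 < θ - ε - 1 / 2 := by linarith
  have hs₂pos : 0 < s₂ := mul_pos hθ2 (exp_pos _)
  -- the active-walk family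
  have hY₁i : iIndepFun (fun i : Fin (a - 1) => X (Sum.inl i)) μP :=
    IHAux.iIndepFun_precomp Sum.inl_injective hindep
  have h1 : ENNReal.ofReal (irwinHallCDF (a - 1) ε)
      ≤ μP {ω | ∑ i, X (Sum.inl i) ω ≤ ε} :=
    IHAux.prob_le μP (a - 1) _ (fun i => hmeas _) hY₁i hunifU ε hε
  -- the failed-walk family, rescaled
  set Y₂ : Fin m → Ω → ℝ := fun j ω => c⁻¹ * X (Sum.inr j) ω with hY₂def
  have hY₂m : ∀ j, Measurable (Y₂ j) := fun j => (hmeas (Sum.inr j)).const_mul c⁻¹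
  have hY₂i : iIndepFun Y₂ μP := by
    have hpre : iIndepFun (fun j : Fin m => X (Sum.inr j)) μP :=
      IHAux.iIndepFun_precomp Sum.inr_injective hindep
    exact hpre.comp (fun _ y => c⁻¹ * y) (fun _ => measurable_const_mul _)
  have hY₂u : ∀ j, μP.map (Y₂ j) = volume.restrict (Set.Icc (0:ℝ) 1) :=
    fun j => IHAux.map_scaled μP (hmeas _) hcpos (hunifV j)
  have h2 : ENNReal.ofReal (irwinHallCDF m s₂) ≤ μP {ω | ∑ j, Y₂ j ω ≤ s₂} :=
    IHAux.prob_le μP m Y₂ hY₂m hY₂i hY₂u s₂ hs₂pos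
  have hset₂ : {ω | ∑ j, Y₂ j ω ≤ s₂} = {ω | ∑ j, X (Sum.inr j) ω ≤ θ - ε - 1 / 2} := by
    ext ω
    simp only [Set.mem_setOf_eq, hY₂def]
    rw [← Finset.mul_sum, hinvc, hs₂]
    have he : 0 < exp (lam * (t - τ)) := exp_pos _
    constructor
    · intro h
      nlinarith
    · intro h
      nlinarith
  rw [hset₂] at h2
  -- independence of the two sums
  set S₁f : Finset (Fin (a - 1) ⊕ Fin m) := Finset.univ.image Sum.inl with hS₁f
  set S₂f : Finset (Fin (a - 1) ⊕ Fin m) := Finset.univ.image Sum.inr with hS₂f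
  have hdisj : Disjoint S₁f S₂f := by
    rw [Finset.disjoint_left]
    intro x hx1 hx2
    simp only [hS₁f, hS₂f, Finset.mem_image, Finset.mem_univ, true_and] at hx1 hx2
    rcases hx1 with ⟨i, rfl⟩
    rcases hx2 with ⟨j, hj⟩
    exact Sum.inl_ne_inr hj.symm
  have hbase := hindep.indepFun_finset S₁f S₂f hdisj hmeas
  have hsumm : ∀ (S : Finset (Fin (a - 1) ⊕ Fin m)),
      Measurable fun v : (i : S) → ℝ => ∑ i : S, v i :=
    fun S => Finset.measurable_sum _ fun i _ => measurable_pi_apply i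
  have hScomp := hbase.comp (hsumm S₁f) (hsumm S₂f)
  have he₁ : ((fun v : (i : S₁f) → ℝ => ∑ i : S₁f, v i) ∘ fun ω (i : S₁f) => X i ω)
      = fun ω => ∑ i, X (Sum.inl i) ω := by
    funext ω
    simp only [Function.comp_apply]
    rw [Finset.sum_coe_sort S₁f (fun i => X i ω), hS₁f,
      Finset.sum_image (fun x _ y _ h => Sum.inl_injective h)]
  have he₂ : ((fun v : (i : S₂f) → ℝ => ∑ i : S₂f, v i) ∘ fun ω (i : S₂f) => X i ω)
      = fun ω => ∑ j, X (Sum.inr j) ω := by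
    funext ω
    simp only [Function.comp_apply]
    rw [Finset.sum_coe_sort S₂f (fun i => X i ω), hS₂f,
      Finset.sum_image (fun x _ y _ h => Sum.inr_injective h)]
  rw [he₁, he₂] at hScomp
  -- combine
  have hAB := hScomp.measure_inter_preimage_eq_mul (Set.Iic ε) (Set.Iic (θ - ε - 1 / 2))
    measurableSet_Iic measurableSet_Iic
  have hpre₁ : (fun ω => ∑ i, X (Sum.inl i) ω) ⁻¹' Set.Iic ε
      = {ω | ∑ i, X (Sum.inl i) ω ≤ ε} := rfl
  have hpre₂ : (fun ω => ∑ j, X (Sum.inr j) ω) ⁻¹' Set.Iic (θ - ε - 1 / 2)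
      = {ω | ∑ j, X (Sum.inr j) ω ≤ θ - ε - 1 / 2} := rfl
  rw [hpre₁, hpre₂] at hAB
  have hsub : {ω | ∑ i, X (Sum.inl i) ω ≤ ε} ∩ {ω | ∑ j, X (Sum.inr j) ω ≤ θ - ε - 1 / 2}
      ⊆ {ω | (∑ i, X (Sum.inl i) ω) + ∑ j, X (Sum.inr j) ω ≤ θ - 1 / 2} := by
    rintro ω ⟨h₁, h₂⟩
    simp only [Set.mem_setOf_eq] at h₁ h₂ ⊢
    linarith
  have hnn₁ : 0 ≤ irwinHallCDF (a - 1) ε := IHAux.irwinHall_nonneg _ _ hε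
  have hnn₂ : 0 ≤ irwinHallCDF m s₂ := IHAux.irwinHall_nonneg _ _ hs₂pos
  have hchain : ENNReal.ofReal (irwinHallCDF (a - 1) ε * irwinHallCDF m s₂)
      ≤ μP {ω | (∑ i, X (Sum.inl i) ω) + ∑ j, X (Sum.inr j) ω ≤ θ - 1 / 2} := by
    calc ENNReal.ofReal (irwinHallCDF (a - 1) ε * irwinHallCDF m s₂)
        = ENNReal.ofReal (irwinHallCDF (a - 1) ε) * ENNReal.ofReal (irwinHallCDF m s₂) :=
          ENNReal.ofReal_mul hnn₁
      _ ≤ μP {ω | ∑ i, X (Sum.inl i) ω ≤ ε}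
            * μP {ω | ∑ j, X (Sum.inr j) ω ≤ θ - ε - 1 / 2} := mul_le_mul' h1 h2
      _ = μP ({ω | ∑ i, X (Sum.inl i) ω ≤ ε}
            ∩ {ω | ∑ j, X (Sum.inr j) ω ≤ θ - ε - 1 / 2}) := hAB.symm
      _ ≤ μP {ω | (∑ i, X (Sum.inl i) ω) + ∑ j, X (Sum.inr j) ω ≤ θ - 1 / 2} :=
          measure_mono hsub
  have hfin : μP {ω | (∑ i, X (Sum.inl i) ω) + ∑ j, X (Sum.inr j) ω ≤ θ - 1 / 2} ≠ ⊤ :=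
    measure_ne_top μP _
  calc irwinHallCDF (a - 1) ε * irwinHallCDF m s₂
      = (ENNReal.ofReal (irwinHallCDF (a - 1) ε * irwinHallCDF m s₂)).toReal :=
        (ENNReal.toReal_ofReal (mul_nonneg hnn₁ hnn₂)).symm
    _ ≤ (μP {ω | (∑ i, X (Sum.inl i) ω) + ∑ j, X (Sum.inr j) ω ≤ θ - 1 / 2}).toReal :=
        ENNReal.toReal_mono hfin hchain
end
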